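/- Let G be a finite group. If the prime-coprime graph Θ(G) is a split graph, then Θ(G) is a complete split graph, i.e., there is a partition of G into a clique K and an independent set I such that every vertex of K is adjacent to every vertex of I. -/

import Mathlib

/-- The prime-coprime graph: distinct vertices `g, h` are adjacent iff
`gcd (orderOf g) (orderOf h)` is `1` or a prime. -/
def primeCoprimeGraph (G : Type*) [Monoid G] : SimpleGraph G where
  Adj g h := g ≠ h ∧
    (Nat.gcd (orderOf g) (orderOf h) = 1 ∨ (Nat.gcd (orderOf g) (orderOf h)).Prime)
  symm := by
    constructor
    rintro g h ⟨hne, hd⟩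
    exact ⟨hne.symm, by rwa [Nat.gcd_comm]⟩
  loopless := by constructor; rintro g ⟨hne, -⟩; exact hne rfl

/-- A set of vertices is independent if no two of its elements are adjacent. -/
def IsIndepSet {V : Type*} (Γ : SimpleGraph V) (s : Set V) : Prop :=
  s.Pairwise fun a b => ¬ Γ.Adj a b

open scoped Classical in
/-- The independence number of a graph on a finite vertex set. -/
noncomputable def indepNum {V : Type*} [Fintype V] (Γ : SimpleGraph V) : ℕ :=
  Finset.univ.sup fun s : Finset V => if IsIndepSet Γ (s : Set V) then s.card else 0

/-- A graph is split if its vertex set can be partitioned into two disjoint nonempty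
subsets, one a clique and the other an independent set. -/
def IsSplit {V : Type*} (Γ : SimpleGraph V) : Prop :=
  ∃ K I : Set V, K.Nonempty ∧ I.Nonempty ∧ Disjoint K I ∧ K ∪ I = Set.univ ∧
    Γ.IsClique K ∧ IsIndepSet Γ I

/-- If `p` is `1` or a prime, then `gcd p q` is `1` or a prime. -/
lemma gcdok {p : ℕ} (q : ℕ) (hp : p = 1 ∨ p.Prime) :
    Nat.gcd p q = 1 ∨ (Nat.gcd p q).Prime := by
  rcases hp with rfl | hp
  · left; simp
  · rcases hp.eq_one_or_self_of_dvd _ (Nat.gcd_dvd_left p q) with h1 | h1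
    · left; exact h1
    · right; rw [h1]; exact hp

theorem split_implies_complete_split (G : Type*) [Group G] [Fintype G]
    (h : IsSplit (primeCoprimeGraph G)) :
    ∃ K I : Set G, K.Nonempty ∧ I.Nonempty ∧ Disjoint K I ∧ K ∪ I = Set.univ ∧
      (primeCoprimeGraph G).IsClique K ∧ IsIndepSet (primeCoprimeGraph G) I ∧
      ∀ x ∈ K, ∀ y ∈ I, (primeCoprimeGraph G).Adj x y := by
  classical
  obtain ⟨K, I, hKne, hIne, hdisj, huniv, hK, hI⟩ := h
  set C : Set G := {g | ¬ (orderOf g = 1 ∨ (orderOf g).Prime)} with hCdef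
  have hmem : ∀ x : G, x ∈ K ∪ I := fun x => huniv ▸ Set.mem_univ x
  -- every composite-order element has a same-order representative in I
  have hrep : ∀ x : G, x ∈ C → ∃ x', x' ∈ I ∧ orderOf x' = orderOf x := by
    intro x hx
    have hxne : x ≠ x⁻¹ := by
      intro he
      have hsq : x ^ 2 = 1 := by rw [pow_two]; nth_rewrite 2 [he]; exact mul_inv_cancel x
      have h2 : orderOf x ∣ 2 := orderOf_dvd_of_pow_eq_one hsq
      rcases (Nat.dvd_prime Nat.prime_two).mp h2 with h1 | h1
      · exact hx (Or.inl h1)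
      · exact hx (Or.inr (h1 ▸ Nat.prime_two))
    have hnadj : ¬ (primeCoprimeGraph G).Adj x x⁻¹ := by
      rintro ⟨-, hg⟩
      rw [orderOf_inv, Nat.gcd_self] at hg
      exact hx hg
    rcases hmem x with hxK | hxI
    · rcases hmem x⁻¹ with hiK | hiI
      · exact absurd (hK hxK hiK hxne) hnadj
      · exact ⟨x⁻¹, hiI, orderOf_inv x⟩
    · exact ⟨x, hxI, rfl⟩
  -- C is an independent set
  have hCindep : IsIndepSet (primeCoprimeGraph G) C := by
    intro a ha b hb hab hadj
    obtain ⟨hne, hgcd⟩ := hadj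
    obtain ⟨a', haI, ha'⟩ := hrep a ha
    obtain ⟨b', hbI, hb'⟩ := hrep b hb
    have hmn : orderOf a ≠ orderOf b := by
      intro he
      rw [he, Nat.gcd_self] at hgcd
      exact hb hgcd
    have hne' : a' ≠ b' := fun he => hmn (by rw [← ha', ← hb', he])
    exact hI haI hbI hne' ⟨hne', by rw [ha', hb']; exact hgcd⟩
  by_cases hCne : C.Nonempty
  · refine ⟨Cᶜ, C, ⟨1, ?_⟩, hCne, disjoint_compl_left, by simp, ?_, hCindep, ?_⟩
    · simp [hCdef]
    · intro x hx y hy hxy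
      exact ⟨hxy, gcdok _ (not_not.mp hx)⟩
    · intro x hx y hy
      have hxy : x ≠ y := fun he => hx (he ▸ hy)
      exact ⟨hxy, gcdok _ (not_not.mp hx)⟩
  · have hall : ∀ g : G, orderOf g = 1 ∨ (orderOf g).Prime := by
      intro g; by_contra hg; exact hCne ⟨g, hg⟩
    obtain ⟨u, hu⟩ := hKne
    obtain ⟨v, hv⟩ := hIne
    have huv : u ≠ v := fun he => (hdisj.ne_of_mem hu hv) he
    refine ⟨{v}ᶜ, {v}, ⟨u, huv⟩, ⟨v, rfl⟩, disjoint_compl_left, Set.compl_union_self {v}, ?_, ?_, ?_⟩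
    · intro x hx y hy hxy
      exact ⟨hxy, gcdok _ (hall x)⟩
    · exact Set.pairwise_singleton v _
    · intro x hx y hy
      have hyv : y = v := hy
      exact ⟨fun he => hx (he ▸ hy), gcdok _ (hall x)⟩
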